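/- Let A ∈ R^{m×n} satisfy the r-RIP with constants δ_s ≤ δ_{2s} ≤ δ_{3s} < 1 for r = s, 2s, 3s. Let x* be s-sparse with support S*, let x_k ∈ R^n be s-sparse, let μ ∈ (0, 1/(1+δ_{2s})), and let y' ∈ R^m satisfy ‖y' - Ax*‖₂ ≤ c‖x_k - x*‖₂ for some c ≥ 0. Set u = H_s(x_k + μA^T(y' - Ax_k)). Then ‖u - x*‖₂ ≤ ρ‖x_k - x*‖₂ where ρ = 2(√2·max{μδ_{3s}, 1 - μ(1-δ_{2s})} + μ√(1+δ_{2s})·c). -/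

import Mathlib

noncomputable def enorm2 {ι : Type*} [Fintype ι] (v : ι → ℝ) : ℝ := Real.sqrt (∑ i, v i ^ 2)

def Sparse {n : ℕ} (s : ℕ) (x : Fin n → ℝ) : Prop :=
  ∃ S : Finset (Fin n), S.card ≤ s ∧ ∀ i ∉ S, x i = 0

def RIP {m n : ℕ} (A : Matrix (Fin m) (Fin n) ℝ) (s : ℕ) (δ : ℝ) : Prop :=
  ∀ x : Fin n → ℝ, Sparse s x →
    (1 - δ) * (enorm2 x)^2 ≤ (enorm2 (A.mulVec x))^2 ∧
      (enorm2 (A.mulVec x))^2 ≤ (1 + δ) * (enorm2 x)^2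

def colSub {m n : ℕ} (A : Matrix (Fin m) (Fin n) ℝ) (S : Finset (Fin n)) :
    Matrix (Fin m) S ℝ := fun i j => A i (j : Fin n)


def IsHardThresh {n : ℕ} (s : ℕ) (v u : Fin n → ℝ) : Prop :=
  ∃ S : Finset (Fin n), S.card = s ∧ (∀ i ∈ S, u i = v i) ∧ (∀ i ∉ S, u i = 0) ∧
    ∀ i ∈ S, ∀ j ∉ S, |v j| ≤ |v i|

namespace HTPaux

open Finset Matrix

variable {m n : ℕ}

/-- restriction of a vector to a finset of coordinates -/
def restr {n : ℕ} (S : Finset (Fin n)) (v : Fin n → ℝ) : Fin n → ℝ :=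
  fun i => if i ∈ S then v i else 0

lemma dot_self_nonneg (v : Fin n → ℝ) : 0 ≤ v ⬝ᵥ v :=
  Finset.sum_nonneg fun i _ => mul_self_nonneg _

lemma enorm_eq_sqrt_dot (v : Fin n → ℝ) : enorm2 v = Real.sqrt (v ⬝ᵥ v) := by
  simp [enorm2, dotProduct, sq]

lemma enorm_nonneg' (v : Fin n → ℝ) : 0 ≤ enorm2 v := Real.sqrt_nonneg _

lemma sq_enorm (v : Fin n → ℝ) : enorm2 v ^ 2 = v ⬝ᵥ v := by
  rw [enorm_eq_sqrt_dot, Real.sq_sqrt (dot_self_nonneg v)]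

lemma enorm_le_of_sq_le {v : Fin n → ℝ} {b : ℝ} (hb : 0 ≤ b) (h : v ⬝ᵥ v ≤ b ^ 2) :
    enorm2 v ≤ b := by
  rw [enorm_eq_sqrt_dot]
  calc Real.sqrt (v ⬝ᵥ v) ≤ Real.sqrt (b ^ 2) := Real.sqrt_le_sqrt h
  _ = b := Real.sqrt_sq hb

lemma enorm_le_of_sq_le_mul {z : Fin n → ℝ} {K : ℝ} (hK : 0 ≤ K)
    (h : enorm2 z ^ 2 ≤ K * enorm2 z) : enorm2 z ≤ K := by
  rcases (enorm_nonneg' z).lt_or_eq with hz | hz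
  · have := h
    rw [sq] at this
    exact le_of_mul_le_mul_right (by linarith [this]) hz
  · linarith [hz]

lemma enorm_eq_zero_imp {v : Fin n → ℝ} (h : enorm2 v = 0) : v = 0 := by
  have h2 : v ⬝ᵥ v = 0 := by
    have := sq_enorm v
    rw [h] at this; simpa using this.symm
  funext i
  have := (Finset.sum_eq_zero_iff_of_nonneg (fun i _ => mul_self_nonneg (v i))).1 h2 i
    (Finset.mem_univ i)
  have := mul_self_eq_zero.1 this
  simpa using this

/-- Cauchy–Schwarz -/
lemma dot_le_enorm_mul (x y : Fin n → ℝ) : x ⬝ᵥ y ≤ enorm2 x * enorm2 y := by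
  have h := Finset.sum_mul_sq_le_sq_mul_sq Finset.univ x y
  have h2 : (x ⬝ᵥ y) ^ 2 ≤ (enorm2 x * enorm2 y) ^ 2 := by
    rw [mul_pow, sq_enorm, sq_enorm]
    simpa [dotProduct, sq] using h
  calc x ⬝ᵥ y ≤ |x ⬝ᵥ y| := le_abs_self _
  _ = Real.sqrt ((x ⬝ᵥ y) ^ 2) := (Real.sqrt_sq_eq_abs _).symm
  _ ≤ Real.sqrt ((enorm2 x * enorm2 y) ^ 2) := Real.sqrt_le_sqrt h2
  _ = enorm2 x * enorm2 y := Real.sqrt_sq (mul_nonneg (enorm_nonneg' _) (enorm_nonneg' _))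

lemma enorm_zero : enorm2 (0 : Fin n → ℝ) = 0 := by simp [enorm2]

lemma enorm_triangle (x y : Fin n → ℝ) : enorm2 (x + y) ≤ enorm2 x + enorm2 y := by
  apply enorm_le_of_sq_le (add_nonneg (enorm_nonneg' x) (enorm_nonneg' y))
  have hd : (x + y) ⬝ᵥ (x + y) = x ⬝ᵥ x + 2 * (x ⬝ᵥ y) + y ⬝ᵥ y := by
    simp [add_dotProduct, dotProduct_add, dotProduct_comm y x]; ring
  have := dot_le_enorm_mul x y
  rw [hd]
  have hx := sq_enorm x; have hy := sq_enorm y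
  nlinarith [enorm_nonneg' x, enorm_nonneg' y]

lemma enorm_smul (a : ℝ) (v : Fin n → ℝ) : enorm2 (a • v) = |a| * enorm2 v := by
  rw [enorm_eq_sqrt_dot, enorm_eq_sqrt_dot]
  have : (a • v) ⬝ᵥ (a • v) = a ^ 2 * (v ⬝ᵥ v) := by
    simp [smul_dotProduct, dotProduct_smul, smul_eq_mul]; ring
  rw [this, Real.sqrt_mul (sq_nonneg a), Real.sqrt_sq_eq_abs]

lemma enorm_neg (v : Fin n → ℝ) : enorm2 (-v) = enorm2 v := by
  simp [enorm2]

lemma restr_supported (S : Finset (Fin n)) (v : Fin n → ℝ) : ∀ i ∉ S, restr S v i = 0 :=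
  fun i hi => if_neg hi

lemma restr_eq_of_supported {S : Finset (Fin n)} {v : Fin n → ℝ} (h : ∀ i ∉ S, v i = 0) :
    restr S v = v := by
  funext i; by_cases hi : i ∈ S <;> simp [restr, hi, h]

lemma restr_add (S : Finset (Fin n)) (x y : Fin n → ℝ) :
    restr S (x + y) = restr S x + restr S y := by
  funext i; by_cases hi : i ∈ S <;> simp [restr, hi]

lemma restr_smul (S : Finset (Fin n)) (a : ℝ) (x : Fin n → ℝ) :
    restr S (a • x) = a • restr S x := by
  funext i; by_cases hi : i ∈ S <;> simp [restr, hi]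

lemma dot_eq_zero_of_disj {x y : Fin n → ℝ} (h : ∀ i, x i = 0 ∨ y i = 0) : x ⬝ᵥ y = 0 := by
  apply Finset.sum_eq_zero
  intro i _
  rcases h i with h' | h' <;> simp [h']

lemma restr_dot_self (S : Finset (Fin n)) (g : Fin n → ℝ) :
    restr S g ⬝ᵥ g = restr S g ⬝ᵥ restr S g := by
  apply Finset.sum_congr rfl
  intro i _
  by_cases hi : i ∈ S <;> simp [restr, hi]

lemma sq_enorm_restr (S : Finset (Fin n)) (v : Fin n → ℝ) :
    enorm2 (restr S v) ^ 2 = ∑ i ∈ S, v i ^ 2 := by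
  rw [sq_enorm]
  rw [show (restr S v ⬝ᵥ restr S v) = ∑ i, if i ∈ S then v i ^ 2 else 0 from ?_]
  · rw [Finset.sum_ite_mem, Finset.univ_inter]
  · apply Finset.sum_congr rfl
    intro i _
    by_cases hi : i ∈ S <;> simp [restr, hi, sq]

lemma enorm_restr_mono {S T : Finset (Fin n)} (h : S ⊆ T) (v : Fin n → ℝ) :
    enorm2 (restr S v) ≤ enorm2 (restr T v) := by
  apply enorm_le_of_sq_le (enorm_nonneg' _)
  rw [← sq_enorm, sq_enorm_restr, sq_enorm_restr]
  exact Finset.sum_le_sum_of_subset_of_nonneg h (fun i _ _ => sq_nonneg _)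

lemma sparse_of_supported {k : ℕ} {S : Finset (Fin n)} (hc : S.card ≤ k) {v : Fin n → ℝ}
    (h : ∀ i ∉ S, v i = 0) : Sparse k v := ⟨S, hc, h⟩

lemma dot_expand (a b : ℝ) (x y : Fin n → ℝ) :
    (a • x - b • y) ⬝ᵥ (a • x - b • y) =
      a ^ 2 * (x ⬝ᵥ x) - 2 * a * b * (x ⬝ᵥ y) + b ^ 2 * (y ⬝ᵥ y) := by
  simp [sub_dotProduct, dotProduct_sub, smul_dotProduct, dotProduct_smul, smul_eq_mul,
    dotProduct_comm y x]
  ring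

section WithA

variable (A : Matrix (Fin m) (Fin n) ℝ)

/-- cross term bound for disjointly supported vectors -/
lemma cross_bound {k : ℕ} {δ : ℝ} (hδ : 0 ≤ δ) (hRIP : RIP A k δ)
    {S S' : Finset (Fin n)} (hdisj : Disjoint S S') (hcard : S.card + S'.card ≤ k)
    {x y : Fin n → ℝ} (hx : ∀ i ∉ S, x i = 0) (hy : ∀ i ∉ S', y i = 0) :
    (A *ᵥ x) ⬝ᵥ (A *ᵥ y) ≤ δ * enorm2 x * enorm2 y := by
  -- step 1 : half bound for any pair supported on S, S'
  have step1 : ∀ x' y' : Fin n → ℝ, (∀ i ∉ S, x' i = 0) → (∀ i ∉ S', y' i = 0) →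
      (A *ᵥ x') ⬝ᵥ (A *ᵥ y') ≤ δ / 2 * (x' ⬝ᵥ x' + y' ⬝ᵥ y') := by
    intro x' y' hx' hy'
    have hsupp : ∀ (a b : ℝ), ∀ i ∉ S ∪ S', (a • x' - b • y') i = 0 := by
      intro a b i hi
      simp only [Finset.mem_union, not_or] at hi
      simp [hx' i hi.1, hy' i hi.2]
    have hcard' : (S ∪ S').card ≤ k := le_trans (Finset.card_union_le _ _) hcard
    have hsp : ∀ (a b : ℝ), Sparse k (a • x' - b • y') := fun a b =>
      sparse_of_supported hcard' (hsupp a b)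
    have hxy0 : x' ⬝ᵥ y' = 0 := by
      apply dot_eq_zero_of_disj
      intro i
      by_cases hi : i ∈ S
      · right; exact hy' i (Finset.disjoint_left.1 hdisj hi)
      · left; exact hx' i hi
    have hplus := (hRIP _ (hsp 1 (-1))).2
    have hminus := (hRIP _ (hsp 1 1)).1
    rw [sq_enorm, sq_enorm] at hplus hminus
    have e1 : (1:ℝ) • x' - (-1:ℝ) • y' = x' + y' := by
      funext i; simp [sub_eq_add_neg]
    have e2 : (1:ℝ) • x' - (1:ℝ) • y' = x' - y' := by funext i; simp
    rw [e1] at hplus; rw [e2] at hminus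
    have hAadd : A *ᵥ (x' + y') = A *ᵥ x' + A *ᵥ y' := mulVec_add A x' y'
    have hAsub : A *ᵥ (x' - y') = A *ᵥ x' - A *ᵥ y' := mulVec_sub A x' y'
    rw [hAadd] at hplus
    rw [hAsub] at hminus
    have hxy0' : y' ⬝ᵥ x' = 0 := by rw [dotProduct_comm]; exact hxy0
    have d1 : (x' + y') ⬝ᵥ (x' + y') = x' ⬝ᵥ x' + y' ⬝ᵥ y' := by
      rw [add_dotProduct, dotProduct_add, dotProduct_add, hxy0, hxy0']; ring
    have d2 : (x' - y') ⬝ᵥ (x' - y') = x' ⬝ᵥ x' + y' ⬝ᵥ y' := by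
      rw [sub_dotProduct, dotProduct_sub, dotProduct_sub, hxy0, hxy0']; ring
    have dA1 : (A *ᵥ x' + A *ᵥ y') ⬝ᵥ (A *ᵥ x' + A *ᵥ y') =
        (A *ᵥ x') ⬝ᵥ (A *ᵥ x') + 2 * ((A *ᵥ x') ⬝ᵥ (A *ᵥ y')) + (A *ᵥ y') ⬝ᵥ (A *ᵥ y') := by
      simp [add_dotProduct, dotProduct_add, dotProduct_comm (A *ᵥ y') (A *ᵥ x')]
      ring
    have dA2 : (A *ᵥ x' - A *ᵥ y') ⬝ᵥ (A *ᵥ x' - A *ᵥ y') =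
        (A *ᵥ x') ⬝ᵥ (A *ᵥ x') - 2 * ((A *ᵥ x') ⬝ᵥ (A *ᵥ y')) + (A *ᵥ y') ⬝ᵥ (A *ᵥ y') := by
      simp [sub_dotProduct, dotProduct_sub, dotProduct_comm (A *ᵥ y') (A *ᵥ x')]
      ring
    rw [dA1, d1] at hplus
    rw [dA2, d2] at hminus
    linarith
  -- step 2 : scaling
  have hx2 : ∀ i ∉ S, (enorm2 y • x) i = 0 := fun i hi => by simp [hx i hi]
  have hy2 : ∀ i ∉ S', (enorm2 x • y) i = 0 := fun i hi => by simp [hy i hi]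
  have h := step1 _ _ hx2 hy2
  have hAx : A *ᵥ (enorm2 y • x) = enorm2 y • (A *ᵥ x) := mulVec_smul A _ x
  have hAy : A *ᵥ (enorm2 x • y) = enorm2 x • (A *ᵥ y) := mulVec_smul A _ y
  rw [hAx, hAy] at h
  have hdots : (enorm2 y • (A *ᵥ x)) ⬝ᵥ (enorm2 x • (A *ᵥ y)) =
      enorm2 y * enorm2 x * ((A *ᵥ x) ⬝ᵥ (A *ᵥ y)) := by
    simp [smul_dotProduct, dotProduct_smul, smul_eq_mul]; ring
  have hdx : (enorm2 y • x) ⬝ᵥ (enorm2 y • x) = enorm2 y ^ 2 * (x ⬝ᵥ x) := by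
    simp [smul_dotProduct, dotProduct_smul, smul_eq_mul]; ring
  have hdy : (enorm2 x • y) ⬝ᵥ (enorm2 x • y) = enorm2 x ^ 2 * (y ⬝ᵥ y) := by
    simp [smul_dotProduct, dotProduct_smul, smul_eq_mul]; ring
  rw [hdots, hdx, hdy, ← sq_enorm, ← sq_enorm] at h
  -- now : enorm2 y * enorm2 x * dot ≤ δ/2 * (ey^2 ex^2 + ex^2 ey^2) = δ ex^2 ey^2
  rcases eq_or_lt_of_le (enorm_nonneg' x) with hex | hex
  · have : x = 0 := enorm_eq_zero_imp hex.symm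
    subst this
    simp [mulVec_zero, enorm_zero]
  rcases eq_or_lt_of_le (enorm_nonneg' y) with hey | hey
  · have : y = 0 := enorm_eq_zero_imp hey.symm
    subst this
    simp [mulVec_zero, enorm_zero]
  have hpos : 0 < enorm2 y * enorm2 x := mul_pos hey hex
  have h2 : enorm2 y * enorm2 x * ((A *ᵥ x) ⬝ᵥ (A *ᵥ y)) ≤
      enorm2 y * enorm2 x * (δ * enorm2 x * enorm2 y) := by nlinarith
  have := le_of_mul_le_mul_left (by linarith [h2] : enorm2 y * enorm2 x * ((A *ᵥ x) ⬝ᵥ (A *ᵥ y)) ≤ enorm2 y * enorm2 x * (δ * enorm2 x * enorm2 y)) hpos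
  linarith

/-- bilinear bound for the form ⟨x,y⟩ - μ⟨Ax,Ay⟩ on a common support -/
lemma Bform_bound {δ : ℝ} {μ : ℝ} {k : ℕ} (hRIP : RIP A k δ) (hδ : 0 ≤ δ)
    (hμ0 : 0 ≤ μ) (hμ1 : μ * (1 + δ) ≤ 1)
    {T : Finset (Fin n)} (hT : T.card ≤ k)
    {x y : Fin n → ℝ} (hx : ∀ i ∉ T, x i = 0) (hy : ∀ i ∉ T, y i = 0) :
    x ⬝ᵥ y - μ * ((A *ᵥ x) ⬝ᵥ (A *ᵥ y)) ≤ (1 - μ * (1 - δ)) * enorm2 x * enorm2 y := by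
  set M : ℝ := 1 - μ * (1 - δ) with hM
  have hM0 : 0 ≤ M := by nlinarith
  have hBself : ∀ z : Fin n → ℝ, (∀ i ∉ T, z i = 0) →
      0 ≤ z ⬝ᵥ z - μ * ((A *ᵥ z) ⬝ᵥ (A *ᵥ z)) ∧
      z ⬝ᵥ z - μ * ((A *ᵥ z) ⬝ᵥ (A *ᵥ z)) ≤ M * (z ⬝ᵥ z) := by
    intro z hz
    have hsp : Sparse k z := sparse_of_supported hT hz
    have hlo := (hRIP z hsp).1
    have hhi := (hRIP z hsp).2
    rw [sq_enorm, sq_enorm] at hlo hhi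
    have hzz : 0 ≤ z ⬝ᵥ z := dot_self_nonneg z
    constructor
    · nlinarith
    · nlinarith
  -- scaling trick with z = ‖y‖ x - ‖x‖ y
  have hsupp : ∀ i ∉ T, (enorm2 y • x - enorm2 x • y) i = 0 := by
    intro i hi; simp [hx i hi, hy i hi]
  obtain ⟨h0, _⟩ := hBself _ hsupp
  have hzd := dot_expand (enorm2 y) (enorm2 x) x y
  have hAz : A *ᵥ (enorm2 y • x - enorm2 x • y) = enorm2 y • (A *ᵥ x) - enorm2 x • (A *ᵥ y) := by
    rw [mulVec_sub, mulVec_smul, mulVec_smul]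
  have hAzd : (A *ᵥ (enorm2 y • x - enorm2 x • y)) ⬝ᵥ (A *ᵥ (enorm2 y • x - enorm2 x • y)) =
      enorm2 y ^ 2 * ((A *ᵥ x) ⬝ᵥ (A *ᵥ x)) -
        2 * enorm2 y * enorm2 x * ((A *ᵥ x) ⬝ᵥ (A *ᵥ y)) +
        enorm2 x ^ 2 * ((A *ᵥ y) ⬝ᵥ (A *ᵥ y)) := by
    rw [hAz]
    simp [sub_dotProduct, dotProduct_sub, smul_dotProduct, dotProduct_smul, smul_eq_mul,
      dotProduct_comm (A *ᵥ y) (A *ᵥ x)]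
    ring
  obtain ⟨hx0, hxM⟩ := hBself x hx
  obtain ⟨hy0, hyM⟩ := hBself y hy
  rw [hzd, hAzd] at h0
  have hXx : x ⬝ᵥ x = enorm2 x ^ 2 := (sq_enorm x).symm
  have hYy : y ⬝ᵥ y = enorm2 y ^ 2 := (sq_enorm y).symm
  rw [hXx] at h0 hxM
  rw [hYy] at h0 hyM
  -- 2 ex ey Bxy ≤ 2 M ex² ey²
  have key : 2 * enorm2 x * enorm2 y * (x ⬝ᵥ y - μ * ((A *ᵥ x) ⬝ᵥ (A *ᵥ y))) ≤
      2 * M * (enorm2 x ^ 2 * enorm2 y ^ 2) := by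
    nlinarith [mul_le_mul_of_nonneg_left hxM (sq_nonneg (enorm2 y)),
      mul_le_mul_of_nonneg_left hyM (sq_nonneg (enorm2 x))]
  rcases eq_or_lt_of_le (enorm_nonneg' x) with hex | hex
  · have : x = 0 := enorm_eq_zero_imp hex.symm
    subst this
    simp [mulVec_zero, enorm_zero]
  rcases eq_or_lt_of_le (enorm_nonneg' y) with hey | hey
  · have : y = 0 := enorm_eq_zero_imp hey.symm
    subst this
    simp [mulVec_zero, enorm_zero]
  have hpos : (0:ℝ) < 2 * enorm2 x * enorm2 y := mul_pos (mul_pos two_pos hex) hey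
  have e : 2 * M * (enorm2 x ^ 2 * enorm2 y ^ 2) =
      2 * enorm2 x * enorm2 y * (M * enorm2 x * enorm2 y) := by ring
  rw [e] at key
  have := le_of_mul_le_mul_left key hpos
  linarith

end WithA

lemma le_of_sq_le' {a b : ℝ} (hb : 0 ≤ b) (h : a ^ 2 ≤ b ^ 2) : a ≤ b := by
  nlinarith [sq_nonneg (a - b), sq_nonneg (a + b)]

lemma pair_bound {n : ℕ} {S1 U : Finset (Fin n)}
    (hcard : (S1 \ U).card ≤ (U \ S1).card) {w : Fin n → ℝ}
    (hmax : ∀ i ∈ U \ S1, ∀ j ∈ S1 \ U, w j ^ 2 ≤ w i ^ 2) :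
    ∑ j ∈ S1 \ U, w j ^ 2 ≤ ∑ i ∈ U \ S1, w i ^ 2 := by
  rcases Nat.eq_zero_or_pos (U \ S1).card with ha | ha
  · have h1 : (S1 \ U).card = 0 := le_antisymm (ha ▸ hcard) (Nat.zero_le _)
    rw [Finset.card_eq_zero.1 h1]
    simp
    exact Finset.sum_nonneg fun i _ => sq_nonneg _
  · have key : ∀ j ∈ S1 \ U, ((U \ S1).card : ℝ) * w j ^ 2 ≤ ∑ i ∈ U \ S1, w i ^ 2 := by
      intro j hj
      calc ((U \ S1).card : ℝ) * w j ^ 2 = ∑ _i ∈ U \ S1, w j ^ 2 := by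
            rw [Finset.sum_const, nsmul_eq_mul]
      _ ≤ ∑ i ∈ U \ S1, w i ^ 2 := Finset.sum_le_sum fun i hi => hmax i hi j hj
    have h2 : ((U \ S1).card : ℝ) * ∑ j ∈ S1 \ U, w j ^ 2 ≤
        ((S1 \ U).card : ℝ) * ∑ i ∈ U \ S1, w i ^ 2 := by
      rw [Finset.mul_sum]
      calc ∑ j ∈ S1 \ U, ((U \ S1).card : ℝ) * w j ^ 2
          ≤ ∑ _j ∈ S1 \ U, ∑ i ∈ U \ S1, w i ^ 2 := Finset.sum_le_sum fun j hj => key j hj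
      _ = ((S1 \ U).card : ℝ) * ∑ i ∈ U \ S1, w i ^ 2 := by
            rw [Finset.sum_const, nsmul_eq_mul]
    have h3 : ((S1 \ U).card : ℝ) * ∑ i ∈ U \ S1, w i ^ 2 ≤
        ((U \ S1).card : ℝ) * ∑ i ∈ U \ S1, w i ^ 2 := by
      apply mul_le_mul_of_nonneg_right _ (Finset.sum_nonneg fun i _ => sq_nonneg _)
      exact_mod_cast hcard
    have hpos : (0:ℝ) < ((U \ S1).card : ℝ) := by exact_mod_cast ha
    exact le_of_mul_le_mul_left (le_trans h2 h3) hpos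

end HTPaux

set_option maxHeartbeats 2000000 in
/-- One HTP gradient step contracts:
`‖u - x*‖ ≤ ρ ‖x_k - x*‖` with `ρ = 2(√2 max{μδ₃ₛ, 1-μ(1-δ₂ₛ)} + μ√(1+δ₂ₛ) c)`. -/
theorem stmt14 {m n s : ℕ} (A : Matrix (Fin m) (Fin n) ℝ)
    (δs δ2s δ3s : ℝ) (h0 : 0 ≤ δs) (h12 : δs ≤ δ2s) (h23 : δ2s ≤ δ3s) (h3 : δ3s < 1)
    (hRIPs : RIP A s δs) (hRIP2s : RIP A (2 * s) δ2s) (hRIP3s : RIP A (3 * s) δ3s)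
    (xstar xk : Fin n → ℝ) (hxs : Sparse s xstar) (hxk : Sparse s xk)
    (μ : ℝ) (hμ : μ ∈ Set.Ioo (0:ℝ) (1 / (1 + δ2s)))
    (c : ℝ) (hc : 0 ≤ c)
    (y' : Fin m → ℝ) (hres : enorm2 (y' - A.mulVec xstar) ≤ c * enorm2 (xk - xstar))
    (u : Fin n → ℝ)
    (hu : IsHardThresh s
      (fun i => xk i + μ * A.transpose.mulVec (y' - A.mulVec xk) i) u) :
    enorm2 (u - xstar) ≤
      2 * (Real.sqrt 2 * max (μ * δ3s) (1 - μ * (1 - δ2s)) +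
        μ * Real.sqrt (1 + δ2s) * c) * enorm2 (xk - xstar) := by
  classical
  open HTPaux Finset Matrix in
  obtain ⟨hμ0, hμub⟩ := hμ
  set w : Fin n → ℝ := fun i => xk i + μ * A.transpose.mulVec (y' - A.mulVec xk) i with hw
  set v : Fin n → ℝ := xk - xstar with hv
  set r : Fin m → ℝ := y' - A.mulVec xstar with hr
  clear_value w v r
  obtain ⟨U, hUcard, hUeq, hUzero, hUmax⟩ := hu
  obtain ⟨S1, hS1card, hS1⟩ := hxs
  obtain ⟨S0, hS0card, hS0⟩ := hxk
  set T : Finset (Fin n) := U ∪ S1 with hT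
  set V : Finset (Fin n) := S0 ∪ S1 with hV
  clear_value T V
  -- scalar preliminaries
  have hδ2 : 0 ≤ δ2s := le_trans h0 h12
  have hδ3 : 0 ≤ δ3s := le_trans hδ2 h23
  have h1δ : (0:ℝ) < 1 + δ2s := by linarith
  have hμ1 : μ * (1 + δ2s) ≤ 1 := by
    have := (lt_div_iff₀ h1δ).1 hμub
    linarith
  set M : ℝ := max (μ * δ3s) (1 - μ * (1 - δ2s)) with hM
  clear_value M
  have hM2 : 1 - μ * (1 - δ2s) ≤ M := by rw [hM]; exact le_max_right _ _
  have hM3 : μ * δ3s ≤ M := by rw [hM]; exact le_max_left _ _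
  have hM0 : 0 ≤ M := le_trans (by nlinarith) hM2
  -- support and cardinality facts
  have hTcard : T.card ≤ 2 * s := by
    have h1 : T.card ≤ U.card + S1.card := by
      rw [hT]; exact Finset.card_union_le U S1
    omega
  have husupp : ∀ i ∉ T, (u - xstar) i = 0 := by
    intro i hi
    simp only [hT, Finset.mem_union, not_or] at hi
    simp [hUzero i hi.1, hS1 i hi.2]
  have hvsupp : ∀ i ∉ V, v i = 0 := by
    intro i hi
    simp only [hV, Finset.mem_union, not_or] at hi
    simp [hv, hS0 i hi.1, hS1 i hi.2]
  ------------------------------------------------------------------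
  -- Step A : thresholding bound ‖u - x*‖ ≤ 2 ‖(w - x*)|_T‖
  ------------------------------------------------------------------
  have hUeq' : ∀ i ∈ U, u i = w i := hUeq
  have stepA : enorm2 (u - xstar) ≤ 2 * enorm2 (restr T (w - xstar)) := by
    have h1 : enorm2 (u - xstar) = enorm2 (restr T (u - xstar)) := by
      rw [restr_eq_of_supported husupp]
    have hsplit : (u - xstar) = (u - w) + (w - xstar) := by
      funext i; simp
    have h2 : restr T (u - xstar) = restr T (u - w) + restr T (w - xstar) := by
      rw [hsplit, restr_add]
    have h3 : restr T (u - w) = -restr (S1 \ U) w := by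
      funext i
      by_cases hiU : i ∈ U
      · have hit : i ∈ T := by rw [hT]; exact Finset.mem_union_left _ hiU
        have : i ∉ S1 \ U := fun hc => (Finset.mem_sdiff.1 hc).2 hiU
        simp [restr, hit, this, hUeq' i hiU]
      · by_cases hiS : i ∈ S1
        · have hit : i ∈ T := by rw [hT]; exact Finset.mem_union_right _ hiS
          have : i ∈ S1 \ U := Finset.mem_sdiff.2 ⟨hiS, hiU⟩
          simp [restr, hit, this, hUzero i hiU]
        · have hit : i ∉ T := by
            simp [hT, Finset.mem_union, hiU, hiS]
          have : i ∉ S1 \ U := fun hc => hiS (Finset.mem_sdiff.1 hc).1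
          simp [restr, hit, this]
    have hcardp : (S1 \ U).card ≤ (U \ S1).card := by
      have e1 := Finset.card_inter_add_card_sdiff S1 U
      have e2 := Finset.card_inter_add_card_sdiff U S1
      have e3 : (S1 ∩ U).card = (U ∩ S1).card := by rw [Finset.inter_comm]
      omega
    have h4 : enorm2 (restr (S1 \ U) w) ≤ enorm2 (restr (U \ S1) w) := by
      apply enorm_le_of_sq_le (enorm_nonneg' _)
      rw [← sq_enorm, sq_enorm_restr, sq_enorm_restr]
      apply pair_bound hcardp
      intro i hi j hj
      have hiU : i ∈ U := (Finset.mem_sdiff.1 hi).1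
      have hjU : j ∉ U := (Finset.mem_sdiff.1 hj).2
      have habs := hUmax i hiU j hjU
      calc w j ^ 2 = |w j| ^ 2 := (sq_abs _).symm
      _ ≤ |w i| ^ 2 := by nlinarith [abs_nonneg (w j), abs_nonneg (w i)]
      _ = w i ^ 2 := sq_abs _
    have h5 : restr (U \ S1) w = restr (U \ S1) (w - xstar) := by
      funext i
      by_cases hi : i ∈ U \ S1
      · have : xstar i = 0 := hS1 i (Finset.mem_sdiff.1 hi).2
        simp [restr, hi, this]
      · simp [restr, hi]
    have h6 : enorm2 (restr (U \ S1) (w - xstar)) ≤ enorm2 (restr T (w - xstar)) := by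
      apply enorm_restr_mono
      intro i hi
      rw [hT]
      exact Finset.mem_union_left _ (Finset.mem_sdiff.1 hi).1
    calc enorm2 (u - xstar) = enorm2 (restr T (u - w) + restr T (w - xstar)) := by
          rw [h1, h2]
    _ ≤ enorm2 (restr T (u - w)) + enorm2 (restr T (w - xstar)) := enorm_triangle _ _
    _ = enorm2 (restr (S1 \ U) w) + enorm2 (restr T (w - xstar)) := by rw [h3, enorm_neg]
    _ ≤ enorm2 (restr T (w - xstar)) + enorm2 (restr T (w - xstar)) := by
          have := le_trans h4 (le_trans (le_of_eq (congrArg enorm2 h5)) h6)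
          linarith
    _ = 2 * enorm2 (restr T (w - xstar)) := by ring
  ------------------------------------------------------------------
  -- Step B : decomposition of (w - x*)|_T
  ------------------------------------------------------------------
  have hwfun : w = xk + μ • (Aᵀ *ᵥ (y' - A *ᵥ xk)) := by
    rw [hw]; funext i; rfl
  have hyA : y' - A *ᵥ xk = r - A *ᵥ v := by
    rw [hr, hv, Matrix.mulVec_sub]
    abel
  set g : Fin n → ℝ := v - μ • (Aᵀ *ᵥ (A *ᵥ v)) with hg
  clear_value g
  have hdecomp : w - xstar = g + μ • (Aᵀ *ᵥ r) := by
    rw [hwfun, hyA, Matrix.mulVec_sub, smul_sub, hg, hv]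
    abel
  set z1 : Fin n → ℝ := restr T g with hz1
  set z2 : Fin n → ℝ := restr T (Aᵀ *ᵥ r) with hz2
  clear_value z1 z2
  have hsplitB : restr T (w - xstar) = z1 + μ • z2 := by
    rw [hdecomp, restr_add, restr_smul, ← hz1, ← hz2]
  have htriB : enorm2 (restr T (w - xstar)) ≤ enorm2 z1 + μ * enorm2 z2 := by
    rw [hsplitB]
    refine le_trans (enorm_triangle _ _) ?_
    rw [enorm_smul, abs_of_nonneg (le_of_lt hμ0)]
  ------------------------------------------------------------------
  -- Step C : bound on z1
  ------------------------------------------------------------------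
  set p : Fin n → ℝ := restr T v with hp
  set q : Fin n → ℝ := v - p with hq'
  clear_value p q
  have hpq : v = p + q := by rw [hq']; abel
  have hqT : ∀ i ∈ T, q i = 0 := by
    intro i hi
    simp [hq', hp, restr, hi]
  have hqsupp : ∀ i ∉ V \ T, q i = 0 := by
    intro i hi
    by_cases hiT : i ∈ T
    · exact hqT i hiT
    · have hiV : i ∉ V := fun hc => hi (Finset.mem_sdiff.2 ⟨hc, hiT⟩)
      simp [hq', hp, restr, hiT, hvsupp i hiV]
  have hz1supp : ∀ i ∉ T, z1 i = 0 := by rw [hz1]; exact restr_supported T g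
  have hpsupp : ∀ i ∉ T, p i = 0 := by rw [hp]; exact restr_supported T v
  have hdisjTV : Disjoint T (V \ T) := Finset.disjoint_sdiff
  have hcard3 : T.card + (V \ T).card ≤ 3 * s := by
    have hsub : V \ T ⊆ S0 := by
      intro i hi
      obtain ⟨hiV, hiT⟩ := Finset.mem_sdiff.1 hi
      rw [hV] at hiV
      rcases Finset.mem_union.1 hiV with h' | h'
      · exact h'
      · have : i ∈ U ∪ S1 := Finset.mem_union_right _ h'
        rw [← hT] at this
        exact absurd this hiT
    have := Finset.card_le_card hsub
    omega
  have hsqz1 : enorm2 z1 ^ 2 = z1 ⬝ᵥ g := by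
    rw [sq_enorm, hz1, restr_dot_self]
  have hdotg : z1 ⬝ᵥ g = z1 ⬝ᵥ v - μ * ((A *ᵥ z1) ⬝ᵥ (A *ᵥ v)) := by
    rw [hg, dotProduct_sub, dotProduct_smul, smul_eq_mul,
      Matrix.dotProduct_mulVec, Matrix.vecMul_transpose]
  have hz1q : z1 ⬝ᵥ q = 0 := by
    apply dot_eq_zero_of_disj
    intro i
    by_cases hi : i ∈ T
    · exact Or.inr (hqT i hi)
    · exact Or.inl (hz1supp i hi)
  have hz1v : z1 ⬝ᵥ v = z1 ⬝ᵥ p := by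
    conv_lhs => rw [hpq]
    rw [dotProduct_add, hz1q, add_zero]
  have hAv : A *ᵥ v = A *ᵥ p + A *ᵥ q := by rw [hpq, Matrix.mulVec_add]
  have hdotA : (A *ᵥ z1) ⬝ᵥ (A *ᵥ v) =
      (A *ᵥ z1) ⬝ᵥ (A *ᵥ p) - (A *ᵥ z1) ⬝ᵥ (A *ᵥ (-q)) := by
    rw [hAv, dotProduct_add, Matrix.mulVec_neg, dotProduct_neg]
    ring
  have bound1 : z1 ⬝ᵥ p - μ * ((A *ᵥ z1) ⬝ᵥ (A *ᵥ p)) ≤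
      (1 - μ * (1 - δ2s)) * enorm2 z1 * enorm2 p :=
    Bform_bound A hRIP2s hδ2 (le_of_lt hμ0) hμ1 hTcard hz1supp hpsupp
  have hnegq : ∀ i ∉ V \ T, (-q) i = 0 := by
    intro i hi; simp [hqsupp i hi]
  have bound2 : (A *ᵥ z1) ⬝ᵥ (A *ᵥ (-q)) ≤ δ3s * enorm2 z1 * enorm2 (-q) :=
    cross_bound A hδ3 hRIP3s hdisjTV hcard3 hz1supp hnegq
  have henq : enorm2 (-q) = enorm2 q := enorm_neg q
  have hpq0 : p ⬝ᵥ q = 0 := by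
    apply dot_eq_zero_of_disj
    intro i
    by_cases hi : i ∈ T
    · exact Or.inr (hqT i hi)
    · exact Or.inl (hpsupp i hi)
  have hqp0 : q ⬝ᵥ p = 0 := by rw [dotProduct_comm]; exact hpq0
  have hvv : p ⬝ᵥ p + q ⬝ᵥ q = v ⬝ᵥ v := by
    conv_rhs => rw [hpq]
    rw [add_dotProduct, dotProduct_add, dotProduct_add, hpq0, hqp0]
    ring
  have hnorm_pq : enorm2 p + enorm2 q ≤ Real.sqrt 2 * enorm2 v := by
    apply le_of_sq_le' (mul_nonneg (Real.sqrt_nonneg 2) (enorm_nonneg' v))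
    have hs2 : Real.sqrt 2 ^ 2 = 2 := Real.sq_sqrt (by norm_num)
    have hcs : enorm2 p * enorm2 q ≤ (enorm2 p ^ 2 + enorm2 q ^ 2) / 2 := by
      nlinarith [sq_nonneg (enorm2 p - enorm2 q)]
    have h1 : enorm2 p ^ 2 + enorm2 q ^ 2 = enorm2 v ^ 2 := by
      rw [sq_enorm, sq_enorm, sq_enorm, hvv]
    nlinarith [enorm_nonneg' p, enorm_nonneg' q]
  have hz1bound : enorm2 z1 ≤ Real.sqrt 2 * M * enorm2 v := by
    apply enorm_le_of_sq_le_mul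
      (mul_nonneg (mul_nonneg (Real.sqrt_nonneg 2) hM0) (enorm_nonneg' v))
    have c1 : z1 ⬝ᵥ p - μ * ((A *ᵥ z1) ⬝ᵥ (A *ᵥ p)) ≤ M * (enorm2 z1 * enorm2 p) := by
      refine le_trans bound1 ?_
      nlinarith [mul_le_mul_of_nonneg_right hM2
        (mul_nonneg (enorm_nonneg' z1) (enorm_nonneg' p))]
    have c2 : μ * ((A *ᵥ z1) ⬝ᵥ (A *ᵥ (-q))) ≤ M * (enorm2 z1 * enorm2 q) := by
      have := mul_le_mul_of_nonneg_left bound2 (le_of_lt hμ0)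
      rw [henq] at this
      refine le_trans this ?_
      nlinarith [mul_le_mul_of_nonneg_right hM3
        (mul_nonneg (enorm_nonneg' z1) (enorm_nonneg' q))]
    have key : enorm2 z1 ^ 2 ≤ M * (enorm2 z1 * (enorm2 p + enorm2 q)) := by
      rw [hsqz1, hdotg, hz1v, hdotA]
      nlinarith [c1, c2]
    refine le_trans key ?_
    have := mul_le_mul_of_nonneg_left hnorm_pq (enorm_nonneg' z1)
    nlinarith [mul_le_mul_of_nonneg_left this hM0]
  ------------------------------------------------------------------
  -- Step D : bound on z2
  ------------------------------------------------------------------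
  have hz2bound : enorm2 z2 ≤ Real.sqrt (1 + δ2s) * (c * enorm2 v) := by
    apply enorm_le_of_sq_le_mul
      (mul_nonneg (Real.sqrt_nonneg _) (mul_nonneg hc (enorm_nonneg' v)))
    have hsq : enorm2 z2 ^ 2 = z2 ⬝ᵥ (Aᵀ *ᵥ r) := by
      rw [sq_enorm, hz2, restr_dot_self]
    have hswap : z2 ⬝ᵥ (Aᵀ *ᵥ r) = (A *ᵥ z2) ⬝ᵥ r := by
      rw [Matrix.dotProduct_mulVec, Matrix.vecMul_transpose]
    have hAz2 : enorm2 (A *ᵥ z2) ≤ Real.sqrt (1 + δ2s) * enorm2 z2 := by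
      apply enorm_le_of_sq_le (mul_nonneg (Real.sqrt_nonneg _) (enorm_nonneg' z2))
      have hsp : Sparse (2 * s) z2 :=
        sparse_of_supported hTcard (by rw [hz2]; exact restr_supported T _)
      have := (hRIP2s z2 hsp).2
      rw [mul_pow, Real.sq_sqrt (le_of_lt h1δ), ← sq_enorm]
      exact this
    have hres' : enorm2 r ≤ c * enorm2 v := hres
    calc enorm2 z2 ^ 2 = (A *ᵥ z2) ⬝ᵥ r := by rw [hsq, hswap]
    _ ≤ enorm2 (A *ᵥ z2) * enorm2 r := dot_le_enorm_mul _ _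
    _ ≤ (Real.sqrt (1 + δ2s) * enorm2 z2) * (c * enorm2 v) := by
        apply mul_le_mul hAz2 hres' (enorm_nonneg' r)
        exact mul_nonneg (Real.sqrt_nonneg _) (enorm_nonneg' z2)
    _ = Real.sqrt (1 + δ2s) * (c * enorm2 v) * enorm2 z2 := by ring
  ------------------------------------------------------------------
  -- Final combination
  ------------------------------------------------------------------
  have hμz2 : μ * enorm2 z2 ≤ μ * (Real.sqrt (1 + δ2s) * (c * enorm2 v)) :=
    mul_le_mul_of_nonneg_left hz2bound (le_of_lt hμ0)
  calc enorm2 (u - xstar) ≤ 2 * enorm2 (restr T (w - xstar)) := stepA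
  _ ≤ 2 * (enorm2 z1 + μ * enorm2 z2) := by linarith
  _ ≤ 2 * (Real.sqrt 2 * M * enorm2 v + μ * (Real.sqrt (1 + δ2s) * (c * enorm2 v))) := by
      linarith
  _ = 2 * (Real.sqrt 2 * M + μ * Real.sqrt (1 + δ2s) * c) * enorm2 v := by ring
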